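/- arXiv:1211.0649 — 6 statements merged into one kernel-verified Lean document; each statement's English description precedes it below -/
import Mathlib

section
/- The image subcomplex I_* = Im(Φ_*) ⊆ Hom_k(k[G]^⊗(*+1), k) is closed under the simplicial cup product: if α ∈ I_p and β ∈ I_q, then α ∪ β ∈ I_{p+q}. -/
/-! Common definitions: cochain complexes computing Hochschild cohomology of a
group ring `k[G]`, the inner product, the map `Φ`, and the various products. -/

noncomputable section Defs

variable (k G : Type) [CommRing k] [Group G]

/-- The bilinear inner product on `k[G]`, extending `⟨g, h⟩ = 1` if `h = g⁻¹`
and `0` otherwise: `⟨a, b⟩ = Σ_g a_g · b_{g⁻¹}`. -/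
def ip (a b : MonoidAlgebra k G) : k :=
  Finsupp.sum a.coeff fun g c => c * b.coeff g⁻¹

/-- Hochschild cochains `Hom_k(k[G]^{⊗n}, k[G])`, identified with functions on
the `k`-basis `G^n` of `k[G]^{⊗n}`. -/
abbrev Cochain (n : ℕ) := (Fin n → G) → MonoidAlgebra k G

/-- The `i`-th face of the (cyclic) bar construction for `0 ≤ i ≤ n-1`:
merge entries `i` and `i+1`. -/
def contract {n : ℕ} (g : Fin (n + 1) → G) (i : Fin n) : Fin n → G :=
  fun j => if j = i then g j.castSucc * g j.succ
    else if (j : ℕ) < (i : ℕ) then g j.castSucc else g j.succ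

/-- The Hochschild coboundary `δ` on `Hom_k(k[G]^{⊗n}, k[G])`. -/
def hdelta {n : ℕ} (f : Cochain k G n) : Cochain k G (n + 1) :=
  fun a => MonoidAlgebra.of k G (a 0) * f (Fin.tail a)
    + ∑ i : Fin n, ((-1 : ℤ) ^ ((i : ℕ) + 1)) • f (contract G a i)
    + ((-1 : ℤ) ^ (n + 1)) • (f (Fin.init a) * MonoidAlgebra.of k G (a (Fin.last n)))

/-- The coboundary `b^*` on `Hom_k(k[G]^{⊗(n+1)}, k)`, dual to the cyclic
Hochschild boundary `b`. -/
def bstar {n : ℕ} (φ : (Fin (n + 1) → G) → k) : (Fin (n + 2) → G) → k :=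
  (∑ i : Fin (n + 1), ((-1 : ℤ) ^ (i : ℕ)) • fun g => φ (contract G g i))
    + ((-1 : ℤ) ^ (n + 1)) •
      fun g => φ (fun j => if j = 0 then g (Fin.last (n + 1)) * g 0 else g j.castSucc)

/-- The cochain map `Φ_n(f)(g₀,…,g_n) = ⟨g₀, f(g₁,…,g_n)⟩`. -/
def Phi {n : ℕ} (f : Cochain k G n) : (Fin (n + 1) → G) → k :=
  fun g => ip k G (MonoidAlgebra.of k G (g 0)) (f (Fin.tail g))

/-- The basis cochain `(g₀, g₁, …, g_n)^# : k[G]^{⊗n} → k[G]`. -/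
def sharp {n : ℕ} [DecidableEq G] (g₀ : G) (gs : Fin n → G) : Cochain k G n :=
  fun h => if h = gs then MonoidAlgebra.of k G g₀ else 0

/-- The dual basis cochain `(t₀, …, t_{m-1})^* : k[G]^{⊗m} → k`. -/
def dstar {m : ℕ} [DecidableEq G] (t : Fin m → G) : (Fin m → G) → k :=
  fun h => if h = t then (1 : k) else 0

/-- The map `Ψ`, recorded by its matrix of coefficients:
`Ψ(α)(g₁,…,g_n)` is the element of `k[G]` whose coefficient at `x` is
`α(x⁻¹, g₁, …, g_n)`; on basis elements `Ψ((g₀,…,g_n)^*) = (g₀⁻¹,g₁,…,g_n)^#`. -/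
def Psi {n : ℕ} (α : (Fin (n + 1) → G) → k) : (Fin n → G) → G → k :=
  fun gs x => α (Fin.cons x⁻¹ gs)

/-- The simplicial cup product on `Hom_k(k[G]^{⊗(•+1)}, k)`:
`(α ∪ β)(g₀,…,g_{p+q}) = α(g_{p+1}⋯g_{p+q}g₀, g₁,…,g_p) · β(g₀⋯g_p, g_{p+1},…,g_{p+q})`. -/
def cup {p q : ℕ} (α : (Fin (p + 1) → G) → k) (β : (Fin (q + 1) → G) → k) :
    (Fin (p + q + 1) → G) → k :=
  fun g =>
    α (Fin.cons
        (((List.ofFn fun t : Fin q => g ⟨p + 1 + (t : ℕ), by have := t.isLt; omega⟩).prod) * g 0)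
        (fun i : Fin p => g ⟨(i : ℕ) + 1, by have := i.isLt; omega⟩))
    * β (Fin.cons
        ((List.ofFn fun t : Fin (p + 1) => g ⟨(t : ℕ), by have := t.isLt; omega⟩).prod)
        (fun i : Fin q => g ⟨p + 1 + (i : ℕ), by have := i.isLt; omega⟩))

/-- The Gerstenhaber (cup) product on Hochschild cochains:
`(f ∪_G g)(a₁,…,a_{p+q}) = f(a₁,…,a_p) · g(a_{p+1},…,a_{p+q})`. -/
def cupG {p q : ℕ} (f : Cochain k G p) (g : Cochain k G q) : Cochain k G (p + q) :=
  fun a => f (a ∘ Fin.castAdd q) * g (a ∘ Fin.natAdd p)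

/-- The `j`-th term of Steenrod's cup-one product, for `α` of degree `p+1` and
`β` of degree `q` (so `0 ≤ j ≤ (p+1)-1`):
`(α ∪₁ β)_j(σ) = α(σ₀,…,σ_j, σ_{j+1}⋯σ_{j+q}, σ_{j+q+1},…) · β(σ_{j+q+1}⋯σ_{p+q}σ₀⋯σ_j, σ_{j+1},…,σ_{j+q})`. -/
def cupOneTerm {p q : ℕ} (α : (Fin (p + 2) → G) → k) (β : (Fin (q + 1) → G) → k)
    (j : Fin (p + 1)) : (Fin (p + q + 1) → G) → k :=
  fun σ =>
    α (fun i : Fin (p + 2) =>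
        if h1 : (i : ℕ) ≤ (j : ℕ) then σ ⟨(i : ℕ), by have := j.isLt; omega⟩
        else if h2 : (i : ℕ) = (j : ℕ) + 1 then
          (List.ofFn fun t : Fin q =>
            σ ⟨(j : ℕ) + 1 + (t : ℕ), by have := t.isLt; have := j.isLt; omega⟩).prod
        else σ ⟨(i : ℕ) + q - 1, by have := i.isLt; omega⟩)
    * β (Fin.cons
        (((List.ofFn fun t : Fin (p - (j : ℕ)) =>
            σ ⟨(j : ℕ) + q + 1 + (t : ℕ), by have := t.isLt; have := j.isLt; omega⟩).prod)
          * ((List.ofFn fun t : Fin ((j : ℕ) + 1) =>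
            σ ⟨(t : ℕ), by have := t.isLt; have := j.isLt; omega⟩).prod))
        (fun t : Fin q =>
          σ ⟨(j : ℕ) + 1 + (t : ℕ), by have := t.isLt; have := j.isLt; omega⟩))

/-- Steenrod's cup-one product (for `α` of degree `p+1`, `β` of degree `q`):
`α ∪₁ β = Σ_j (-1)^{((p+1)-1-j)(q-1)} (α ∪₁ β)_j`.  (The exponent is written as
`(p-j)*(q+1)`, which has the same parity as `((p+1)-1-j)*(q-1)` for every `q ≥ 0`.) -/
def cupOne {p q : ℕ} (α : (Fin (p + 2) → G) → k) (β : (Fin (q + 1) → G) → k) :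
    (Fin (p + q + 1) → G) → k :=
  fun σ => ∑ j : Fin (p + 1),
    ((-1 : ℤ) ^ ((p - (j : ℕ)) * (q + 1))) • cupOneTerm k G α β j σ

/-- Gerstenhaber's `j`-th composition `f ∘_{(j)} g` (for `f` of degree `p+1`,
`g` of degree `q`): substitute `g` into the `j`-th slot of (the multilinear
extension of) `f`. -/
def compAt {p q : ℕ} (f : Cochain k G (p + 1)) (g : Cochain k G q) (j : Fin (p + 1)) :
    Cochain k G (p + q) :=
  fun a => Finsupp.sum
    (g fun t : Fin q => a ⟨(j : ℕ) + (t : ℕ), by have := t.isLt; have := j.isLt; omega⟩).coeff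
    (fun x c => c • f (fun i : Fin (p + 1) =>
      if h1 : (i : ℕ) < (j : ℕ) then a ⟨(i : ℕ), by have := j.isLt; omega⟩
      else if h2 : (i : ℕ) = (j : ℕ) then x
      else a ⟨(i : ℕ) + q - 1, by have := i.isLt; omega⟩))

/-- Gerstenhaber's pre-Lie product `f ∘ g = Σ_j (-1)^{(p-1-j)(q-1)} f ∘_{(j)} g`
(`f` of degree `p+1`, `g` of degree `q`; the exponent `(p-j)*(q+1)` has the same
parity as `((p+1)-1-j)*(q-1)`). -/
def preLie {p q : ℕ} (f : Cochain k G (p + 1)) (g : Cochain k G q) : Cochain k G (p + q) :=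
  fun a => ∑ j : Fin (p + 1),
    ((-1 : ℤ) ^ ((p - (j : ℕ)) * (q + 1))) • compAt k G f g j a

/-- The face maps of the cyclic bar construction `N^cy_*(G)`, from
`N^cy_{n+1}(G) = G^{n+2}` to `N^cy_n(G) = G^{n+1}`. -/
def cycFace {n : ℕ} (i : Fin (n + 2)) (g : Fin (n + 2) → G) : Fin (n + 1) → G :=
  if h : (i : ℕ) = n + 1 then
    fun j => if j = 0 then g (Fin.last (n + 1)) * g 0 else g j.castSucc
  else contract G g ⟨(i : ℕ), by have := i.isLt; omega⟩

/-- The degeneracy maps of the cyclic bar construction: insert the identity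
after position `i`. -/
def cycDegen {n : ℕ} (i : Fin (n + 1)) (g : Fin (n + 1) → G) : Fin (n + 2) → G :=
  fun j => if h1 : (j : ℕ) ≤ (i : ℕ) then g ⟨(j : ℕ), by have := i.isLt; omega⟩
    else if h2 : (j : ℕ) = (i : ℕ) + 1 then 1
    else g ⟨(j : ℕ) - 1, by have := j.isLt; omega⟩

/-- The simplicial map `ι : B_*(G) → N^cy_*(G)`,
`ι(g₁,…,g_n) = ((g₁g₂⋯g_n)⁻¹, g₁, …, g_n)`. -/
def iotaMap {n : ℕ} (g : Fin n → G) : Fin (n + 1) → G :=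
  Fin.cons ((List.ofFn g).prod)⁻¹ g

end Defs


section Aux
variable (k G : Type) [CommRing k] [Group G]

lemma ip_of_apply (g : G) (b : MonoidAlgebra k G) :
    ip k G (MonoidAlgebra.of k G g) b = b.coeff g⁻¹ := by
  unfold ip
  simp [MonoidAlgebra.of_apply, MonoidAlgebra.coeff_single]

end Aux

/-- the image subcomplex `I_* = Im Φ_*` is closed under the
simplicial cup product: `α ∈ I_p`, `β ∈ I_q` imply `α ∪ β ∈ I_{p+q}`. -/
theorem cup_mem_image (k G : Type) [CommRing k] [Group G] (p q : ℕ)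
    (α : (Fin (p + 1) → G) → k) (β : (Fin (q + 1) → G) → k)
    (hα : α ∈ Set.range (fun f : Cochain k G p => Phi k G f))
    (hβ : β ∈ Set.range (fun f : Cochain k G q => Phi k G f)) :
    cup k G α β ∈ Set.range (fun f : Cochain k G (p + q) => Phi k G f) := by
  obtain ⟨f, rfl⟩ := hα
  obtain ⟨f', rfl⟩ := hβ
  refine ⟨fun a => MonoidAlgebra.ofCoeff ((f (fun i : Fin p => a ⟨(i : ℕ), by have := i.isLt; omega⟩)).coeff.sum
    fun y c => Finsupp.single
      (y * (List.ofFn fun t : Fin q => a ⟨p + (t : ℕ), by have := t.isLt; omega⟩).prod)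
      (c * (f' (fun t : Fin q => a ⟨p + (t : ℕ), by have := t.isLt; omega⟩)).coeff
        (((List.ofFn fun i : Fin p => a ⟨(i : ℕ), by have := i.isLt; omega⟩).prod)⁻¹ *
          (y * (List.ofFn fun t : Fin q => a ⟨p + (t : ℕ), by have := t.isLt; omega⟩).prod)))), ?_⟩
  funext g
  simp only [Phi, ip_of_apply, MonoidAlgebra.coeff_ofCoeff, cup, Fin.tail_cons, Fin.cons_zero]
  have key : ∀ (A : Fin p → G) (B : Fin q → G) (x : G),
      ((f A).coeff.sum fun y c => Finsupp.single (y * (List.ofFn B).prod)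
        (c * (f' B).coeff (((List.ofFn A).prod)⁻¹ * (y * (List.ofFn B).prod)))) x⁻¹
      = (f A).coeff (((List.ofFn B).prod * x)⁻¹) * (f' B).coeff ((x * (List.ofFn A).prod)⁻¹) := by
    intro A B x
    classical
    rw [Finsupp.sum_apply]
    simp only [Finsupp.single_apply]
    rw [Finsupp.sum, Finset.sum_eq_single (x⁻¹ * ((List.ofFn B).prod)⁻¹)]
    · simp [mul_inv_rev, inv_mul_cancel_right, mul_assoc]
    · intro b _ hb
      rw [if_neg]
      intro hcond
      exact hb (eq_mul_inv_iff_mul_eq.mpr hcond)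
    · intro h
      simp [Finsupp.notMem_support_iff.mp h]
  rw [key]
  have hA : (fun i : Fin p => Fin.tail g ⟨(i : ℕ), by have := i.isLt; omega⟩)
      = (fun i : Fin p => g ⟨(i : ℕ) + 1, by have := i.isLt; omega⟩) := by
    funext i; rfl
  have hB : (fun t : Fin q => Fin.tail g ⟨p + (t : ℕ), by have := t.isLt; omega⟩)
      = (fun t : Fin q => g ⟨p + 1 + (t : ℕ), by have := t.isLt; omega⟩) := by
    funext t
    show g (Fin.succ ⟨p + (t : ℕ), _⟩) = _
    congr 1
    apply Fin.ext
    simp [Fin.val_succ]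
    omega
  have hQ : (List.ofFn fun t : Fin (p + 1) => g ⟨(t : ℕ), by have := t.isLt; omega⟩).prod
      = g 0 * (List.ofFn fun i : Fin p => g ⟨(i : ℕ) + 1, by have := i.isLt; omega⟩).prod := by
    rw [List.ofFn_succ, List.prod_cons]
    congr 1
  rw [hA, hB, hQ]
end

section
/- For α = (α₀, α₁, …, α_p)* and β = (β₀, β₁, …, β_q)*, the simplicial cup product α ∪ β is nonzero only if α₀α₁⋯α_p = β₁β₂⋯β_qβ₀ in G, in which case α ∪ β = (β₀(α₁⋯α_p)⁻¹, α₁, …, α_p, β₁, …, β_q)*. -/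
private lemma ofFn_prod_tail {G : Type} [Group G] {n : ℕ} (f : Fin (n + 1) → G) :
    (List.ofFn f).prod = f 0 * (List.ofFn (Fin.tail f)).prod := by
  rw [List.ofFn_succ, List.prod_cons]
  rfl

private lemma ite_mul_ite_eq {k : Type} [MulZeroOneClass k] {P Q R : Prop}
    [Decidable P] [Decidable Q] [Decidable R] (h : P ∧ Q ↔ R) :
    (if P then (1 : k) else 0) * (if Q then 1 else 0) = if R then 1 else 0 := by
  simp only [← h]
  by_cases hP : P <;> by_cases hQ : Q <;> simp [hP, hQ]

/-- for basis cochains `α = (α₀,…,α_p)^*`, `β = (β₀,…,β_q)^*`,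
the cup product `α ∪ β` is nonzero only if `α₀α₁⋯α_p = β₁β₂⋯β_qβ₀`, in which
case `α ∪ β = (β₀(α₁⋯α_p)⁻¹, α₁, …, α_p, β₁, …, β_q)^*`. -/
theorem cup_dstar (k G : Type) [CommRing k] [Group G] [DecidableEq G] (p q : ℕ)
    (a : Fin (p + 1) → G) (b : Fin (q + 1) → G) :
    (cup k G (dstar k G a) (dstar k G b) ≠ 0 →
      (List.ofFn a).prod = (List.ofFn (Fin.tail b)).prod * b 0)
    ∧ ((List.ofFn a).prod = (List.ofFn (Fin.tail b)).prod * b 0 →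
      cup k G (dstar k G a) (dstar k G b) =
        dstar k G (Fin.cons (b 0 * ((List.ofFn (Fin.tail a)).prod)⁻¹)
          (Fin.append (Fin.tail a) (Fin.tail b)))) := by
  classical
  constructor
  · intro h
    rw [Ne, funext_iff] at h
    push_neg at h
    obtain ⟨g, hg⟩ := h
    simp only [cup, dstar, Pi.zero_apply] at hg
    split_ifs at hg with h1 h2
    · have ha0 : a 0 = (List.ofFn fun t : Fin q =>
          g ⟨p + 1 + (t : ℕ), by have := t.isLt; omega⟩).prod * g 0 := by
        rw [← h1, Fin.cons_zero]
      have hat : Fin.tail a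
          = fun i : Fin p => g ⟨(i : ℕ) + 1, by have := i.isLt; omega⟩ := by
        rw [← h1, Fin.tail_cons]
      have hb0 : b 0 = (List.ofFn fun t : Fin (p + 1) =>
          g ⟨(t : ℕ), by have := t.isLt; omega⟩).prod := by
        rw [← h2, Fin.cons_zero]
      have hbt : Fin.tail b
          = fun i : Fin q => g ⟨p + 1 + (i : ℕ), by have := i.isLt; omega⟩ := by
        rw [← h2, Fin.tail_cons]
      have hsplit : (List.ofFn fun t : Fin (p + 1) =>
            g ⟨(t : ℕ), by have := t.isLt; omega⟩).prod
          = g 0 * (List.ofFn fun i : Fin p =>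
            g ⟨(i : ℕ) + 1, by have := i.isLt; omega⟩).prod := by
        rw [ofFn_prod_tail]
        congr 1
      rw [ofFn_prod_tail a, ha0, hat, hbt, hb0, hsplit, mul_assoc]
    all_goals simp at hg
  · intro hab
    funext g
    simp only [cup, dstar]
    apply ite_mul_ite_eq
    constructor
    · rintro ⟨h1, h2⟩
      have ha0 : a 0 = (List.ofFn fun t : Fin q =>
          g ⟨p + 1 + (t : ℕ), by have := t.isLt; omega⟩).prod * g 0 := by
        rw [← h1, Fin.cons_zero]
      have hat : Fin.tail a
          = fun i : Fin p => g ⟨(i : ℕ) + 1, by have := i.isLt; omega⟩ := by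
        rw [← h1, Fin.tail_cons]
      have hb0 : b 0 = (List.ofFn fun t : Fin (p + 1) =>
          g ⟨(t : ℕ), by have := t.isLt; omega⟩).prod := by
        rw [← h2, Fin.cons_zero]
      have hbt : Fin.tail b
          = fun i : Fin q => g ⟨p + 1 + (i : ℕ), by have := i.isLt; omega⟩ := by
        rw [← h2, Fin.tail_cons]
      have hsplit : (List.ofFn fun t : Fin (p + 1) =>
            g ⟨(t : ℕ), by have := t.isLt; omega⟩).prod
          = g 0 * (List.ofFn fun i : Fin p =>
            g ⟨(i : ℕ) + 1, by have := i.isLt; omega⟩).prod := by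
        rw [ofFn_prod_tail]
        congr 1
      have hb0' : b 0 = g 0 * (List.ofFn (Fin.tail a)).prod := by
        rw [hb0, hsplit, hat]
      funext j
      refine Fin.cases ?_ (fun i => ?_) j
      · rw [Fin.cons_zero, hb0']
        group
      · rw [Fin.cons_succ]
        refine Fin.addCases (fun i' => ?_) (fun i' => ?_) i
        · rw [Fin.append_left, congrFun hat i']
          congr 1
        · rw [Fin.append_right, congrFun hbt i']
          congr 1
          all_goals exact Fin.ext (by simp [Nat.add_assoc, Nat.add_comm, Nat.add_left_comm])
    · intro hc
      subst hc
      set c : Fin (p + q + 1) → G := Fin.cons (b 0 * ((List.ofFn (Fin.tail a)).prod)⁻¹)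
        (Fin.append (Fin.tail a) (Fin.tail b)) with hcdef
      have hc0 : c 0 = b 0 * ((List.ofFn (Fin.tail a)).prod)⁻¹ := Fin.cons_zero _ _
      have hca : ∀ i : Fin p,
          c ⟨(i : ℕ) + 1, by have := i.isLt; omega⟩ = Fin.tail a i := by
        intro i
        have : (⟨(i : ℕ) + 1, by have := i.isLt; omega⟩ : Fin (p + q + 1))
            = (Fin.castAdd q i).succ := Fin.ext (by simp)
        rw [this, hcdef, Fin.cons_succ, Fin.append_left]
      have hcb : ∀ i : Fin q,
          c ⟨p + 1 + (i : ℕ), by have := i.isLt; omega⟩ = Fin.tail b i := by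
        intro i
        have : (⟨p + 1 + (i : ℕ), by have := i.isLt; omega⟩ : Fin (p + q + 1))
            = (Fin.natAdd p i).succ := Fin.ext (by simp [Nat.add_assoc, Nat.add_comm, Nat.add_left_comm])
        rw [this, hcdef, Fin.cons_succ, Fin.append_right]
      have hB : (List.ofFn fun t : Fin q =>
            c ⟨p + 1 + (t : ℕ), by have := t.isLt; omega⟩)
          = List.ofFn (Fin.tail b) := by
        congr 1
        exact funext hcb
      have hA : (List.ofFn fun t : Fin (p + 1) =>
            c ⟨(t : ℕ), by have := t.isLt; omega⟩).prod = b 0 := by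
        rw [ofFn_prod_tail]
        have ht : Fin.tail (fun t : Fin (p + 1) =>
            c ⟨(t : ℕ), by have := t.isLt; omega⟩) = Fin.tail a := by
          funext i
          exact hca i
        rw [ht, show (⟨((0 : Fin (p + 1)) : ℕ), by omega⟩ : Fin (p + q + 1)) = 0
          from Fin.ext (by simp), hc0]
        group
      constructor
      · have hgoal0 : (List.ofFn fun t : Fin q =>
            c ⟨p + 1 + (t : ℕ), by have := t.isLt; omega⟩).prod * c 0 = a 0 := by
          rw [hB, hc0, ← mul_assoc, ← hab, ofFn_prod_tail a]
          group
        have hgt : (fun i : Fin p =>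
            c ⟨(i : ℕ) + 1, by have := i.isLt; omega⟩) = Fin.tail a := funext hca
        rw [hgoal0, hgt, Fin.cons_self_tail]
      · have hgt : (fun i : Fin q =>
            c ⟨p + 1 + (i : ℕ), by have := i.isLt; omega⟩) = Fin.tail b := funext hcb
        rw [hA, hgt, Fin.cons_self_tail]
end

section
/- If α = (α₀, …, α_p)* and β = (β₀, …, β_q)* are basis cochains such that the products α₀α₁⋯α_p and β₀β₁⋯β_q lie in different conjugacy classes of G, then the simplicial cup product α ∪ β = 0. -/
/-- if the products `α₀α₁⋯α_p` and `β₀β₁⋯β_q` lie in different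
conjugacy classes of `G`, then the simplicial cup product `α ∪ β = 0`. -/
theorem cup_dstar_eq_zero_of_not_isConj (k G : Type) [CommRing k] [Group G] [DecidableEq G]
    (p q : ℕ) (a : Fin (p + 1) → G) (b : Fin (q + 1) → G)
    (h : ¬ IsConj ((List.ofFn a).prod) ((List.ofFn b).prod)) :
    cup k G (dstar k G a) (dstar k G b) = 0 := by
  funext g
  simp only [cup, dstar, Pi.zero_apply, mul_ite, mul_one, mul_zero, ite_mul, one_mul, zero_mul]
  split_ifs with h1 h2
  · exfalso
    apply h
    set X := (List.ofFn fun t : Fin q => g ⟨p + 1 + (t : ℕ), by have := t.isLt; omega⟩).prod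
      with hX
    set Y := (List.ofFn fun t : Fin (p + 1) => g ⟨(t : ℕ), by have := t.isLt; omega⟩).prod
      with hY
    have ha : (List.ofFn a).prod = X * Y := by
      rw [← h2, hY]
      simp only [List.ofFn_succ, List.prod_cons, Fin.cons_zero, Fin.cons_succ]
      rw [← mul_assoc]
      rfl
    have hb : (List.ofFn b).prod = Y * X := by
      rw [← h1, hX]
      simp only [List.ofFn_succ, List.prod_cons, Fin.cons_zero, Fin.cons_succ]
    rw [ha, hb, isConj_iff]
    exact ⟨Y, by group⟩
  all_goals rfl
end

section
/- The j-th term of Steenrod's cup-one product of basis cochains α = (α₀,…,α_p)* and β = (β₀,…,β_q)* is nonzero only if β₁β₂⋯β_q = α_{j+1} and α_{j+2}⋯α_pα₀α₁⋯α_j = β₀, in which case (α ∪₁ β)_j = (α₀, α₁, …, α_j, β₁, …, β_q, α_{j+2}, …, α_p)*. Consequently the image subcomplex I_* = Im(Φ_*) is closed under the cup-one product. -/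
set_option linter.unusedSectionVars false

section MyAux
section Aux
variable {k G : Type} [CommRing k] [Group G]

lemma ip_of (c : G) (b : MonoidAlgebra k G) : ip k G (MonoidAlgebra.of k G c) b = b.coeff c⁻¹ := by
  classical
  unfold ip
  rw [MonoidAlgebra.of_apply, MonoidAlgebra.coeff_single, Finsupp.sum_single_index (by simp), one_mul]

lemma Phi_apply {n : ℕ} (f : Cochain k G n) (σ : Fin (n+1) → G) :
    Phi k G f σ = (f (Fin.tail σ)).coeff ((σ 0)⁻¹) := by
  unfold Phi; rw [ip_of]

lemma cons_mk_succ {n : ℕ} (x : G) (gs : Fin n → G) (m : ℕ) (h : m + 1 < n + 1) :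
    (Fin.cons x gs : Fin (n+1) → G) ⟨m+1, h⟩ = gs ⟨m, Nat.lt_of_succ_lt_succ h⟩ := by
  rw [show (⟨m+1, h⟩ : Fin (n+1)) = (⟨m, Nat.lt_of_succ_lt_succ h⟩ : Fin n).succ from rfl,
    Fin.cons_succ]

end Aux

section Aux2
variable {G : Type} [Group G]

/-- The first argument of `cupOneTerm` (copied verbatim). -/
def funA (p q : ℕ) (j : Fin (p + 1)) (σ : Fin (p + q + 1) → G) : Fin (p + 2) → G :=
  fun i : Fin (p + 2) =>
    if h1 : (i : ℕ) ≤ (j : ℕ) then σ ⟨(i : ℕ), by have := j.isLt; omega⟩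
    else if h2 : (i : ℕ) = (j : ℕ) + 1 then
      (List.ofFn fun t : Fin q =>
        σ ⟨(j : ℕ) + 1 + (t : ℕ), by have := t.isLt; have := j.isLt; omega⟩).prod
    else σ ⟨(i : ℕ) + q - 1, by have := i.isLt; omega⟩

/-- The second argument of `cupOneTerm` (copied verbatim). -/
def funB (p q : ℕ) (j : Fin (p + 1)) (σ : Fin (p + q + 1) → G) : Fin (q + 1) → G :=
  Fin.cons
    (((List.ofFn fun t : Fin (p - (j : ℕ)) =>
        σ ⟨(j : ℕ) + q + 1 + (t : ℕ), by have := t.isLt; have := j.isLt; omega⟩).prod)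
      * ((List.ofFn fun t : Fin ((j : ℕ) + 1) =>
        σ ⟨(t : ℕ), by have := t.isLt; have := j.isLt; omega⟩).prod))
    (fun t : Fin q =>
      σ ⟨(j : ℕ) + 1 + (t : ℕ), by have := t.isLt; have := j.isLt; omega⟩)

/-- The merged tuple (copied verbatim from the statement). -/
def funC (p q : ℕ) (a : Fin (p + 2) → G) (b : Fin (q + 1) → G) (j : Fin (p + 1)) :
    Fin (p + q + 1) → G :=
  fun i : Fin (p + q + 1) =>
    if h1 : (i : ℕ) ≤ (j : ℕ) then a ⟨(i : ℕ), by have := j.isLt; exact Nat.lt_of_le_of_lt (Nat.le_refl _) (by omega)⟩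
    else if h2 : (i : ℕ) ≤ (j : ℕ) + q then b ⟨(i : ℕ) - (j : ℕ), by exact Nat.lt_succ_of_le (by omega)⟩
    else a ⟨(i : ℕ) - q + 1, by have := i.isLt; exact Nat.lt_of_le_of_lt (Nat.le_refl _) (by omega)⟩

lemma cupOneTerm_eq {k : Type} [CommRing k] {p q : ℕ}
    (α : (Fin (p + 2) → G) → k) (β : (Fin (q + 1) → G) → k) (j : Fin (p + 1))
    (σ : Fin (p + q + 1) → G) :
    cupOneTerm k G α β j σ = α (funA p q j σ) * β (funB p q j σ) := rfl

variable {p q : ℕ} (j : Fin (p + 1)) (σ : Fin (p + q + 1) → G)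

lemma funA_lo (m : ℕ) (h : m ≤ (j : ℕ)) (hlt : m < p + 2) :
    funA p q j σ ⟨m, hlt⟩ = σ ⟨m, by have := j.isLt; omega⟩ := by
  simp only [funA]
  rw [dif_pos (show ((⟨m, hlt⟩ : Fin (p + 2)) : ℕ) ≤ (j : ℕ) from h)]

lemma funA_mid (m : ℕ) (h : m = (j : ℕ) + 1) (hlt : m < p + 2) :
    funA p q j σ ⟨m, hlt⟩ =
      (List.ofFn fun t : Fin q =>
        σ ⟨(j : ℕ) + 1 + (t : ℕ), by have := t.isLt; have := j.isLt; omega⟩).prod := by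
  simp only [funA]
  rw [dif_neg (show ¬((⟨m, hlt⟩ : Fin (p + 2)) : ℕ) ≤ (j : ℕ) by simp; omega),
    dif_pos (show ((⟨m, hlt⟩ : Fin (p + 2)) : ℕ) = (j : ℕ) + 1 from h)]

lemma funA_hi (m : ℕ) (h : (j : ℕ) + 1 < m) (hlt : m < p + 2) :
    funA p q j σ ⟨m, hlt⟩ = σ ⟨m + q - 1, by omega⟩ := by
  simp only [funA]
  rw [dif_neg (show ¬((⟨m, hlt⟩ : Fin (p + 2)) : ℕ) ≤ (j : ℕ) by simp; omega),
    dif_neg (show ¬((⟨m, hlt⟩ : Fin (p + 2)) : ℕ) = (j : ℕ) + 1 by simp; omega)]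

lemma funB_zero :
    funB p q j σ 0 =
      ((List.ofFn fun t : Fin (p - (j : ℕ)) =>
        σ ⟨(j : ℕ) + q + 1 + (t : ℕ), by have := t.isLt; have := j.isLt; omega⟩).prod)
      * ((List.ofFn fun t : Fin ((j : ℕ) + 1) =>
        σ ⟨(t : ℕ), by have := t.isLt; have := j.isLt; omega⟩).prod) := rfl

lemma funB_succ (m : ℕ) (hm : m + 1 < q + 1) :
    funB p q j σ ⟨m + 1, hm⟩ =
      σ ⟨(j : ℕ) + 1 + m, by have := j.isLt; omega⟩ := by
  rw [funB, cons_mk_succ]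

lemma funC_lo (a : Fin (p + 2) → G) (b : Fin (q + 1) → G) (m : ℕ) (h : m ≤ (j : ℕ))
    (hlt : m < p + q + 1) :
    funC p q a b j ⟨m, hlt⟩ = a ⟨m, by have := j.isLt; omega⟩ := by
  simp only [funC]
  rw [dif_pos (show ((⟨m, hlt⟩ : Fin (p + q + 1)) : ℕ) ≤ (j : ℕ) from h)]

lemma funC_mid (a : Fin (p + 2) → G) (b : Fin (q + 1) → G) (m : ℕ) (h1 : (j : ℕ) < m)
    (h2 : m ≤ (j : ℕ) + q) (hlt : m < p + q + 1) :
    funC p q a b j ⟨m, hlt⟩ = b ⟨m - (j : ℕ), by omega⟩ := by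
  simp only [funC]
  rw [dif_neg (show ¬((⟨m, hlt⟩ : Fin (p + q + 1)) : ℕ) ≤ (j : ℕ) by simp; omega),
    dif_pos (show ((⟨m, hlt⟩ : Fin (p + q + 1)) : ℕ) ≤ (j : ℕ) + q from h2)]

lemma funC_hi (a : Fin (p + 2) → G) (b : Fin (q + 1) → G) (m : ℕ) (h : (j : ℕ) + q < m)
    (hlt : m < p + q + 1) :
    funC p q a b j ⟨m, hlt⟩ = a ⟨m - q + 1, by omega⟩ := by
  simp only [funC]
  rw [dif_neg (show ¬((⟨m, hlt⟩ : Fin (p + q + 1)) : ℕ) ≤ (j : ℕ) by simp; omega),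
    dif_neg (show ¬((⟨m, hlt⟩ : Fin (p + q + 1)) : ℕ) ≤ (j : ℕ) + q by simp; omega)]

end Aux2

section Aux3
variable {G : Type} [Group G]

lemma myIff (p q : ℕ) (a : Fin (p + 2) → G) (b : Fin (q + 1) → G) (j : Fin (p + 1))
    (hb1 : (List.ofFn (Fin.tail b)).prod = a j.succ)
    (hb2 : (List.ofFn fun t : Fin (p - (j : ℕ)) =>
          a ⟨(j : ℕ) + 2 + (t : ℕ), by have := t.isLt; have := j.isLt; exact Nat.lt_of_le_of_lt (Nat.le_refl _) (by omega)⟩).prod *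
        (List.ofFn fun t : Fin ((j : ℕ) + 1) =>
          a ⟨(t : ℕ), by have := t.isLt; have := j.isLt; exact Nat.lt_of_le_of_lt (Nat.le_refl _) (by omega)⟩).prod = b 0)
    (σ : Fin (p + q + 1) → G) :
    (funA p q j σ = a ∧ funB p q j σ = b) ↔ σ = funC p q a b j := by
  constructor
  · rintro ⟨hA, hB⟩
    funext i
    obtain ⟨m, hlt⟩ := i
    by_cases hc1 : m ≤ (j : ℕ)
    · rw [funC_lo j a b m hc1 hlt, ← hA, funA_lo j σ m hc1]
    · by_cases hc2 : m ≤ (j : ℕ) + q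
      · rw [funC_mid j a b m (by omega) hc2 hlt, ← hB,
          show (⟨m - (j : ℕ), by omega⟩ : Fin (q + 1)) = ⟨(m - (j : ℕ) - 1) + 1, by omega⟩
            from Fin.ext (by simp only [Fin.val_mk]; omega),
          funB_succ j σ (m - (j : ℕ) - 1) (by omega)]
        exact congrArg σ (Fin.ext (by simp only [Fin.val_mk]; omega))
      · rw [funC_hi j a b m (by omega) hlt, ← hA,
          funA_hi j σ (m - q + 1) (by omega) (by omega)]
        exact congrArg σ (Fin.ext (by simp only [Fin.val_mk]; omega))
  · intro h
    subst h
    constructor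
    · funext i
      obtain ⟨m, hlt⟩ := i
      by_cases hc1 : m ≤ (j : ℕ)
      · rw [funA_lo j _ m hc1 hlt, funC_lo j a b m hc1 (by omega)]
      · by_cases hc2 : m = (j : ℕ) + 1
        · rw [funA_mid j _ m hc2 hlt]
          have e : (List.ofFn fun t : Fin q => funC p q a b j
              ⟨(j : ℕ) + 1 + (t : ℕ), by have := t.isLt; have := j.isLt; omega⟩)
              = List.ofFn (Fin.tail b) := by
            refine congrArg List.ofFn (funext fun t => ?_)
            rw [funC_mid j a b ((j : ℕ) + 1 + (t : ℕ)) (by omega) (by have := t.isLt; omega)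
              (by have := t.isLt; have := j.isLt; omega)]
            show b _ = b t.succ
            exact congrArg b (Fin.ext (by simp only [Fin.val_mk, Fin.val_succ]; omega))
          rw [e, hb1]
          exact congrArg a (Fin.ext (by simp only [Fin.val_succ, Fin.val_mk]; omega))
        · rw [funA_hi j _ m (by omega) hlt,
            funC_hi j a b (m + q - 1) (by omega) (by omega)]
          exact congrArg a (Fin.ext (by simp only [Fin.val_mk]; omega))
    · funext t
      obtain ⟨m, hmlt⟩ := t
      match m, hmlt with
      | 0, hmlt =>
        rw [show (⟨0, hmlt⟩ : Fin (q + 1)) = 0 from rfl, funB_zero, ← hb2]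
        congr 1
        · refine congrArg List.prod (congrArg List.ofFn (funext fun t => ?_))
          rw [funC_hi j a b ((j : ℕ) + q + 1 + (t : ℕ)) (by omega)
            (by have := t.isLt; have := j.isLt; omega)]
          exact congrArg a (Fin.ext (by simp only [Fin.val_mk]; omega))
        · refine congrArg List.prod (congrArg List.ofFn (funext fun t => ?_))
          rw [funC_lo j a b (t : ℕ) (by have := t.isLt; omega)
            (by have := t.isLt; have := j.isLt; omega)]
      | m + 1, hmlt =>
        rw [funB_succ j _ m hmlt,
          funC_mid j a b ((j : ℕ) + 1 + m) (by omega) (by omega) (by omega)]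
        exact congrArg b (Fin.ext (by simp only [Fin.val_mk]; omega))

end Aux3

section Aux4
variable {G : Type} [Group G]

/-- `Fin.tail (funA p q j σ)`, as a function of `Fin.tail σ`. -/
def funT (p q : ℕ) (j : Fin (p + 1)) (gs : Fin (p + q) → G) : Fin (p + 1) → G := fun i =>
  if h1 : (i : ℕ) + 1 ≤ (j : ℕ) then gs ⟨(i : ℕ), by have := j.isLt; omega⟩
  else if h2 : (i : ℕ) = (j : ℕ) then
    (List.ofFn fun t : Fin q =>
      gs ⟨(j : ℕ) + (t : ℕ), by have := t.isLt; have := j.isLt; omega⟩).prod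
  else gs ⟨(i : ℕ) + q - 1, by have := i.isLt; have := j.isLt; omega⟩

/-- `Fin.tail (funB p q j σ)`, as a function of `Fin.tail σ`. -/
def funR (p q : ℕ) (j : Fin (p + 1)) (gs : Fin (p + q) → G) : Fin q → G :=
  fun t => gs ⟨(j : ℕ) + (t : ℕ), by have := t.isLt; have := j.isLt; omega⟩

def funW (p q : ℕ) (j : Fin (p + 1)) (gs : Fin (p + q) → G) : G :=
  (List.ofFn fun t : Fin (p - (j : ℕ)) =>
    gs ⟨(j : ℕ) + q + (t : ℕ), by have := t.isLt; have := j.isLt; omega⟩).prod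

def funV (p q : ℕ) (j : Fin (p + 1)) (gs : Fin (p + q) → G) : G :=
  (List.ofFn fun t : Fin (j : ℕ) =>
    gs ⟨(t : ℕ), by have := t.isLt; have := j.isLt; omega⟩).prod

variable {p q : ℕ} (j : Fin (p + 1)) (σ : Fin (p + q + 1) → G)

lemma funT_lo (gs : Fin (p + q) → G) (m : ℕ) (h : m + 1 ≤ (j : ℕ)) (hlt : m < p + 1) :
    funT p q j gs ⟨m, hlt⟩ = gs ⟨m, by have := j.isLt; omega⟩ := by
  simp only [funT]
  rw [dif_pos (show ((⟨m, hlt⟩ : Fin (p + 1)) : ℕ) + 1 ≤ (j : ℕ) from h)]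

lemma funT_mid (gs : Fin (p + q) → G) (m : ℕ) (h : m = (j : ℕ)) (hlt : m < p + 1) :
    funT p q j gs ⟨m, hlt⟩ =
      (List.ofFn fun t : Fin q =>
        gs ⟨(j : ℕ) + (t : ℕ), by have := t.isLt; have := j.isLt; omega⟩).prod := by
  simp only [funT]
  rw [dif_neg (show ¬((⟨m, hlt⟩ : Fin (p + 1)) : ℕ) + 1 ≤ (j : ℕ) by simp only [Fin.val_mk]; omega),
    dif_pos (show ((⟨m, hlt⟩ : Fin (p + 1)) : ℕ) = (j : ℕ) from h)]

lemma funT_hi (gs : Fin (p + q) → G) (m : ℕ) (h : (j : ℕ) < m) (hlt : m < p + 1) :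
    funT p q j gs ⟨m, hlt⟩ = gs ⟨m + q - 1, by omega⟩ := by
  simp only [funT]
  rw [dif_neg (show ¬((⟨m, hlt⟩ : Fin (p + 1)) : ℕ) + 1 ≤ (j : ℕ) by simp only [Fin.val_mk]; omega),
    dif_neg (show ¬((⟨m, hlt⟩ : Fin (p + 1)) : ℕ) = (j : ℕ) by simp only [Fin.val_mk]; omega)]

lemma funA_tail : Fin.tail (funA p q j σ) = funT p q j (Fin.tail σ) := by
  funext i
  obtain ⟨m, hlt⟩ := i
  show funA p q j σ (Fin.succ ⟨m, hlt⟩) = _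
  rw [show Fin.succ (⟨m, hlt⟩ : Fin (p + 1)) = ⟨m + 1, by omega⟩ from rfl]
  by_cases hc1 : m + 1 ≤ (j : ℕ)
  · rw [funA_lo j σ (m + 1) hc1, funT_lo j _ m hc1 hlt]
    exact congrArg σ (Fin.ext (by simp only [Fin.val_mk, Fin.val_succ]; try omega))
  · by_cases hc2 : m = (j : ℕ)
    · rw [funA_mid j σ (m + 1) (by omega), funT_mid j _ m hc2 hlt]
      refine congrArg List.prod (congrArg List.ofFn (funext fun t => ?_))
      exact congrArg σ (Fin.ext (by simp only [Fin.val_mk, Fin.val_succ]; try omega))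
    · rw [funA_hi j σ (m + 1) (by omega), funT_hi j _ m (by omega) hlt]
      exact congrArg σ (Fin.ext (by simp only [Fin.val_mk, Fin.val_succ]; try omega))

lemma funB_tail : Fin.tail (funB p q j σ) = funR p q j (Fin.tail σ) := by
  rw [funB, Fin.tail_cons]
  funext t
  exact congrArg σ (Fin.ext (by simp only [Fin.val_mk, Fin.val_succ]; try omega))

lemma funB_zero' :
    funB p q j σ 0 = funW p q j (Fin.tail σ) * (σ 0 * funV p q j (Fin.tail σ)) := by
  rw [funB_zero, funW, funV]
  congr 1
  · refine congrArg List.prod (congrArg List.ofFn (funext fun t => ?_))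
    show σ _ = σ (Fin.succ _)
    exact congrArg σ (Fin.ext (by simp only [Fin.val_mk, Fin.val_succ]; try omega))
  · rw [List.ofFn_succ, List.prod_cons]
    refine congrArg₂ (· * ·) rfl ?_
    refine congrArg List.prod (congrArg List.ofFn (funext fun t => ?_))
    show σ _ = σ (Fin.succ _)
    exact congrArg σ (Fin.ext (by simp only [Fin.val_mk, Fin.val_succ]; try omega))

end Aux4

section Aux5
variable {k G : Type} [CommRing k] [Group G]

lemma funA_zero {p q : ℕ} (j : Fin (p + 1)) (σ : Fin (p + q + 1) → G) :
    funA p q j σ 0 = σ 0 := by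
  rw [show (0 : Fin (p + 2)) = ⟨0, by omega⟩ from rfl, funA_lo j σ 0 (by omega)]
  exact congrArg σ (Fin.ext (by simp))

lemma cupOneTerm_Phi {p q : ℕ} (f : Cochain k G (p + 1)) (g : Cochain k G q)
    (j : Fin (p + 1)) (σ : Fin (p + q + 1) → G) :
    cupOneTerm k G (Phi k G f) (Phi k G g) j σ =
      (f (funT p q j (Fin.tail σ))).coeff ((σ 0)⁻¹) *
      (g (funR p q j (Fin.tail σ))).coeff
        ((funW p q j (Fin.tail σ) * (σ 0 * funV p q j (Fin.tail σ)))⁻¹) := by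
  rw [cupOneTerm_eq, Phi_apply, Phi_apply, funA_tail, funB_tail, funB_zero', funA_zero]

lemma finsupp_single_sum_apply (F : G →₀ k) (m : G → k) (y : G) :
    (F.sum fun x c => Finsupp.single x (c * m x)) y = F y * m y := by
  classical
  rw [Finsupp.sum_apply]
  rw [Finsupp.sum]
  simp only [Finsupp.single_apply]
  rw [Finset.sum_ite_eq' F.support y (fun x => F x * m x)]
  by_cases hy : y ∈ F.support
  · rw [if_pos hy]
  · rw [if_neg hy, Finsupp.notMem_support_iff.mp hy, zero_mul]

end Aux5


end MyAux

/-- the `j`-th term of the cup-one product of basis cochains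
`α = (α₀,…,α_{p+1})^*` (of degree `p+1`) and `β = (β₀,…,β_q)^*` is nonzero only
if `β₁⋯β_q = α_{j+1}` and `α_{j+2}⋯α_{p+1}·α₀⋯α_j = β₀`, in which case
`(α ∪₁ β)_j = (α₀,…,α_j, β₁,…,β_q, α_{j+2},…,α_{p+1})^*`.  Consequently
`I_* = Im Φ_*` is closed under the cup-one product. -/
theorem cupOneTerm_dstar (k G : Type) [CommRing k] [Group G] [DecidableEq G] (p q : ℕ)
    (a : Fin (p + 2) → G) (b : Fin (q + 1) → G) (j : Fin (p + 1)) :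
    (cupOneTerm k G (dstar k G a) (dstar k G b) j ≠ 0 →
      (List.ofFn (Fin.tail b)).prod = a j.succ ∧
      ((List.ofFn fun t : Fin (p - (j : ℕ)) =>
          a ⟨(j : ℕ) + 2 + (t : ℕ), by have := t.isLt; have := j.isLt; omega⟩).prod *
        (List.ofFn fun t : Fin ((j : ℕ) + 1) =>
          a ⟨(t : ℕ), by have := t.isLt; have := j.isLt; omega⟩).prod = b 0))
    ∧ (((List.ofFn (Fin.tail b)).prod = a j.succ ∧
      ((List.ofFn fun t : Fin (p - (j : ℕ)) =>
          a ⟨(j : ℕ) + 2 + (t : ℕ), by have := t.isLt; have := j.isLt; omega⟩).prod *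
        (List.ofFn fun t : Fin ((j : ℕ) + 1) =>
          a ⟨(t : ℕ), by have := t.isLt; have := j.isLt; omega⟩).prod = b 0)) →
      cupOneTerm k G (dstar k G a) (dstar k G b) j =
        dstar k G (fun i : Fin (p + q + 1) =>
          if h1 : (i : ℕ) ≤ (j : ℕ) then a ⟨(i : ℕ), by have := j.isLt; omega⟩
          else if h2 : (i : ℕ) ≤ (j : ℕ) + q then b ⟨(i : ℕ) - (j : ℕ), by omega⟩
          else a ⟨(i : ℕ) - q + 1, by have := i.isLt; omega⟩))
    ∧ ∀ (α : (Fin (p + 2) → G) → k) (β : (Fin (q + 1) → G) → k),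
      α ∈ Set.range (fun f : Cochain k G (p + 1) => Phi k G f) →
      β ∈ Set.range (fun f : Cochain k G q => Phi k G f) →
      cupOne k G α β ∈ Set.range (fun f : Cochain k G (p + q) => Phi k G f) := by
  classical
  refine ⟨?_, ?_, ?_⟩
  · -- Part 1: nonvanishing forces the two conditions.
    intro hne
    rw [Function.ne_iff] at hne
    obtain ⟨σ, hσ⟩ := hne
    simp only [cupOneTerm, dstar, Pi.zero_apply] at hσ
    split_ifs at hσ with h1 h2
    all_goals try simp at hσ
    constructor
    · rw [← h1, ← h2]
      simp only [Fin.tail_cons, Fin.val_succ]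
      rw [dif_neg (by omega)]
      simp
    · rw [← h1, ← h2]
      rw [Fin.cons_zero]
      congr 1
      · refine congrArg List.prod (congrArg List.ofFn (funext fun t => ?_))
        show (if h1 : _ ≤ (j : ℕ) then _ else if h2 : _ = (j : ℕ) + 1 then _ else _) = _
        rw [dif_neg (by simp; omega), dif_neg (by simp; omega)]
        congr 1
        simp only [Fin.mk.injEq]
        omega
      · refine congrArg List.prod (congrArg List.ofFn (funext fun t => ?_))
        show (if h1 : _ ≤ (j : ℕ) then _ else if h2 : _ = (j : ℕ) + 1 then _ else _) = _
        rw [dif_pos (by simp; omega)]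
  · -- Part 2: under the two conditions the term is the indicated dual basis cochain.
    rintro ⟨hb1, hb2⟩
    funext σ
    show (if funA p q j σ = a then (1 : k) else 0) * (if funB p q j σ = b then 1 else 0)
      = if σ = funC p q a b j then 1 else 0
    by_cases hσ : σ = funC p q a b j
    · rw [if_pos hσ]
      obtain ⟨e1, e2⟩ := (myIff p q a b j hb1 hb2 σ).mpr hσ
      rw [if_pos e1, if_pos e2, one_mul]
    · rw [if_neg hσ]
      rcases not_and_or.mp (fun hh => hσ ((myIff p q a b j hb1 hb2 σ).mp hh)) with h | h
      · rw [if_neg h, zero_mul]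
      · rw [if_neg h, mul_zero]
  · -- Part 3: the image of `Φ` is closed under the cup-one product.
    rintro α β ⟨f, rfl⟩ ⟨g, rfl⟩
    refine ⟨fun gs => ∑ j : Fin (p + 1), ((-1 : ℤ) ^ ((p - (j : ℕ)) * (q + 1))) •
      MonoidAlgebra.ofCoeff ((f (funT p q j gs)).coeff.sum fun x c => Finsupp.single x
        (c * (g (funR p q j gs)).coeff ((funW p q j gs * (x⁻¹ * funV p q j gs))⁻¹))), ?_⟩
    funext σ
    show Phi k G _ σ = cupOne k G (Phi k G f) (Phi k G g) σ
    rw [Phi_apply, cupOne]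
    rw [MonoidAlgebra.coeff_sum, Finsupp.finset_sum_apply]
    simp only [MonoidAlgebra.coeff_smul, MonoidAlgebra.coeff_ofCoeff, Finsupp.smul_apply]
    refine Finset.sum_congr rfl fun j _ => ?_
    rw [finsupp_single_sum_apply, cupOneTerm_Phi, inv_inv]
end

section
/- If α = (α₀, …, α_p)* and β = (β₀, …, β_q)* are cochains supported on BG (i.e., α₀α₁⋯α_p = e and β₀β₁⋯β_q = e in G), then Ψ_{p+q}(α ∪ β) = Ψ_p(α) ∪_G Ψ_q(β), i.e., the simplicial cup product agrees with the Gerstenhaber cup product: for f = Ψ_p(α), g = Ψ_q(β), f ∪_S g = f ∪_G g as cochains. -/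
/-- if `α = (α₀,…,α_p)^*` and `β = (β₀,…,β_q)^*` are supported on
`BG` (`α₀α₁⋯α_p = e` and `β₀β₁⋯β_q = e`), then `Ψ(α ∪ β) = Ψ(α) ∪_G Ψ(β)`:
the simplicial cup product agrees with the Gerstenhaber product, i.e. for
`f = Ψ_p(α) = (α₀⁻¹, α₁,…,α_p)^#` and `g = Ψ_q(β)` one has
`f ∪_S g = f ∪_G g` as cochains.  (Applying the injective cochain map `Φ`,
this is the identity `α ∪ β = Φ(Ψ(α) ∪_G Ψ(β))`.) -/
theorem cup_eq_cupG_on_BG (k G : Type) [CommRing k] [Group G] [DecidableEq G] (p q : ℕ)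
    (a : Fin (p + 1) → G) (b : Fin (q + 1) → G)
    (ha : (List.ofFn a).prod = 1) (hb : (List.ofFn b).prod = 1) :
    cup k G (dstar k G a) (dstar k G b) =
      Phi k G (cupG k G (sharp k G (a 0)⁻¹ (Fin.tail a)) (sharp k G (b 0)⁻¹ (Fin.tail b))) := by
  funext g
  simp only [cup, Phi, cupG, sharp, dstar, ip, Function.comp]
  have hX : (fun i : Fin p => g ⟨(i : ℕ) + 1, by have := i.isLt; omega⟩)
      = Fin.tail g ∘ Fin.castAdd q := by
    funext i
    simp only [Function.comp_apply, Fin.tail]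
    congr 1
  have hY : (fun i : Fin q => g ⟨p + 1 + (i : ℕ), by have := i.isLt; omega⟩)
      = Fin.tail g ∘ Fin.natAdd p := by
    funext i
    simp only [Function.comp_apply, Fin.tail]
    congr 1
    ext
    simp
    omega
  rw [hX, hY]
  rw [MonoidAlgebra.of_apply, MonoidAlgebra.coeff_single, Finsupp.sum_single_index (by simp), one_mul]
  rw [MonoidAlgebra.of_apply, MonoidAlgebra.of_apply]
  by_cases hx : Fin.tail g ∘ Fin.castAdd q = Fin.tail a
  · by_cases hy : Fin.tail g ∘ Fin.natAdd p = Fin.tail b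
    · -- main case
      have hta : (List.ofFn (Fin.tail a)).prod = (a 0)⁻¹ := by
        rw [List.ofFn_succ] at ha
        exact (inv_eq_of_mul_eq_one_right ha).symm
      have htb : (List.ofFn (Fin.tail b)).prod = (b 0)⁻¹ := by
        rw [List.ofFn_succ] at hb
        exact (inv_eq_of_mul_eq_one_right hb).symm
      rw [hx, hy, htb]
      have h2 : (List.ofFn fun t : Fin (p + 1) =>
          g ⟨(t : ℕ), by have := t.isLt; omega⟩).prod = g 0 * (a 0)⁻¹ := by
        rw [List.ofFn_succ, List.prod_cons, ← hta, ← hx]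
        congr 1
      rw [h2]
      rw [if_pos rfl, if_pos rfl, MonoidAlgebra.single_mul_single, one_mul,
        MonoidAlgebra.coeff_single, Finsupp.single_apply]
      have c1 : (Fin.cons ((b 0)⁻¹ * g 0) (Fin.tail a) = a)
          ↔ (b 0)⁻¹ * g 0 = a 0 := by
        conv_lhs => rw [show a = Fin.cons (a 0) (Fin.tail a) from (Fin.cons_self_tail a).symm]
        rw [Fin.cons_inj]
        simp
      have c2 : (Fin.cons (g 0 * (a 0)⁻¹) (Fin.tail b) = b)
          ↔ g 0 * (a 0)⁻¹ = b 0 := by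
        conv_lhs => rw [show b = Fin.cons (b 0) (Fin.tail b) from (Fin.cons_self_tail b).symm]
        rw [Fin.cons_inj]
        simp
      have e1 : ((b 0)⁻¹ * g 0 = a 0) ↔ ((a 0)⁻¹ * (b 0)⁻¹ = (g 0)⁻¹) := by
        rw [inv_mul_eq_iff_eq_mul, ← mul_inv_rev, inv_eq_iff_eq_inv, inv_inv, eq_comm]
      have e2 : (g 0 * (a 0)⁻¹ = b 0) ↔ ((a 0)⁻¹ * (b 0)⁻¹ = (g 0)⁻¹) := by
        rw [mul_inv_eq_iff_eq_mul, ← mul_inv_rev, inv_eq_iff_eq_inv, inv_inv]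
        exact eq_comm
      simp only [c1, c2, e1, e2]
      split_ifs <;> simp
    · rw [if_neg hy, mul_zero, MonoidAlgebra.coeff_zero, Finsupp.zero_apply]
      have : ¬ (Fin.cons (List.ofFn fun t : Fin (p + 1) =>
          g ⟨(t : ℕ), by have := t.isLt; omega⟩).prod (Fin.tail g ∘ Fin.natAdd p) = b) := by
        intro h
        have h' := congrArg Fin.tail h
        rw [Fin.tail_cons] at h'
        exact hy h'
      rw [if_neg this, mul_zero]
  · rw [if_neg hx, zero_mul, MonoidAlgebra.coeff_zero, Finsupp.zero_apply]
    have : ¬ (Fin.cons ((List.ofFn (Fin.tail g ∘ Fin.natAdd p)).prod * g 0)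
        (Fin.tail g ∘ Fin.castAdd q) = a) := by
      intro h
      have h' := congrArg Fin.tail h
      rw [Fin.tail_cons] at h'
      exact hx h'
    rw [if_neg this, zero_mul]
end

section
/- If α = (α₀,…,α_p)* and β = (β₀,…,β_q)* are supported on BG (products of coordinates equal e), then for each 0 ≤ j ≤ p-1, Ψ_{p+q-1}((α ∪₁ β)_j) = Ψ_p(α) ∘_{(j)} Ψ_q(β), i.e., the j-th term of Steenrod's cup-one product equals the j-th Gerstenhaber composition. -/
private lemma fapp13 {α : Type} {n : ℕ} (f : Fin n → α) {i j : Fin n} (h : (i:ℕ) = (j:ℕ)) :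
    f i = f j := congrArg f (Fin.ext h)

private lemma ip_of13 (k G : Type) [CommRing k] [Group G] (g : G) (X : MonoidAlgebra k G) :
    ip k G (MonoidAlgebra.of k G g) X = X.coeff g⁻¹ := by
  unfold ip
  rw [MonoidAlgebra.of_apply, MonoidAlgebra.coeff_single, Finsupp.sum_single_index] <;> simp

private lemma prod_split13 {G : Type} [Monoid G] (N m : ℕ) (h : m ≤ N) (f : Fin N → G) :
    (List.ofFn f).prod =
      (List.ofFn fun i : Fin m => f ⟨i, by omega⟩).prod *
      (List.ofFn fun i : Fin (N - m) => f ⟨m + i, by omega⟩).prod := by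
  rw [List.ofFn_congr (show N = m + (N - m) by omega), List.ofFn_add, List.prod_append]
  congr 1

private lemma prod_split13' {G : Type} [Monoid G] (N m : ℕ) (h : m < N) (f : Fin N → G) :
    (List.ofFn f).prod =
      (List.ofFn fun i : Fin m => f ⟨i, by omega⟩).prod * (f ⟨m, h⟩ *
      (List.ofFn fun i : Fin (N - m - 1) => f ⟨m + 1 + i, by omega⟩).prod) := by
  rw [prod_split13 N m (le_of_lt h) f]
  congr 1
  rw [List.ofFn_congr (show N - m = (N - m - 1) + 1 by omega), List.ofFn_succ, List.prod_cons]
  congr 1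
  exact congrArg List.prod (congrArg List.ofFn
    (funext fun i => congrArg f (Fin.ext (by simp; omega))))

/-- if `α = (α₀,…,α_{p+1})^*` (degree `p+1`) and `β = (β₀,…,β_q)^*`
are supported on `BG` (coordinates multiply to `e`), then for each `0 ≤ j ≤ p`,
`Ψ((α ∪₁ β)_j) = Ψ(α) ∘_{(j)} Ψ(β)`: the `j`-th term of Steenrod's cup-one
product equals the `j`-th Gerstenhaber composition.  (Applying the injective
cochain map `Φ`, this is `(α ∪₁ β)_j = Φ(Ψ(α) ∘_{(j)} Ψ(β))`.) -/
theorem cupOneTerm_eq_compAt_on_BG (k G : Type) [CommRing k] [Group G] [DecidableEq G]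
    (p q : ℕ) (a : Fin (p + 2) → G) (b : Fin (q + 1) → G)
    (ha : (List.ofFn a).prod = 1) (hb : (List.ofFn b).prod = 1) (j : Fin (p + 1)) :
    cupOneTerm k G (dstar k G a) (dstar k G b) j =
      Phi k G (compAt k G (sharp k G (a 0)⁻¹ (Fin.tail a))
        (sharp k G (b 0)⁻¹ (Fin.tail b)) j) := by
  have hbtail : (List.ofFn fun t : Fin q => b t.succ).prod = (b 0)⁻¹ := by
    rw [List.ofFn_succ, List.prod_cons] at hb
    exact eq_inv_of_mul_eq_one_right hb
  funext σ
  simp only [cupOneTerm, dstar, Phi, compAt, sharp]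
  rw [ip_of13]
  by_cases hB1 : (fun t : Fin q => Fin.tail σ ⟨(j : ℕ) + (t : ℕ), by have := t.isLt; have := j.isLt; omega⟩) = Fin.tail b
  · -- B1 holds
    have hb1 : ∀ t : Fin q, σ ⟨(j:ℕ)+1+(t:ℕ), by have := t.isLt; have := j.isLt; omega⟩ = b t.succ := by
      intro t
      have h := congrFun hB1 t
      simp only [Fin.tail] at h
      exact (fapp13 σ (by simp; omega)).trans h
    have hσprod : (List.ofFn fun t : Fin q => σ ⟨(j:ℕ)+1+(t:ℕ), by have := t.isLt; have := j.isLt; omega⟩).prod = (b 0)⁻¹ :=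
      (congrArg List.prod (congrArg List.ofFn (funext hb1))).trans hbtail
    rw [if_pos hB1, MonoidAlgebra.of_apply, MonoidAlgebra.coeff_single, Finsupp.sum_single_index (by rw [zero_smul])]
    rw [one_smul]
    by_cases hB2 : (fun i : Fin (p+1) =>
        if h1 : (i : ℕ) < (j : ℕ) then Fin.tail σ ⟨(i : ℕ), by have := j.isLt; omega⟩
        else if h2 : (i : ℕ) = (j : ℕ) then (b 0)⁻¹
        else Fin.tail σ ⟨(i : ℕ) + q - 1, by have := i.isLt; omega⟩) = Fin.tail a
    · -- B2 holds
      have h2lt : ∀ (m : ℕ) (_ : m < (j:ℕ)), σ ⟨m+1, by have := j.isLt; omega⟩ = a ⟨m+1, by have := j.isLt; omega⟩ := by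
        intro m hm
        have h := congrFun hB2 ⟨m, by have := j.isLt; omega⟩
        simp only [Fin.tail] at h
        rw [dif_pos hm] at h
        exact (fapp13 σ (by simp)).trans (h.trans (fapp13 a (by simp)))
      have h2eq : (b 0)⁻¹ = a ⟨(j:ℕ)+1, by have := j.isLt; omega⟩ := by
        have h := congrFun hB2 ⟨(j:ℕ), j.isLt⟩
        simp only [Fin.tail] at h
        rw [dif_neg (by omega)] at h
        rw [dif_pos trivial] at h
        exact h.trans (fapp13 a (by simp))
      have h2gt : ∀ (m : ℕ) (hm1 : m < p + 1) (_ : (j:ℕ) < m),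
          σ ⟨m+q, by omega⟩ = a ⟨m+1, by omega⟩ := by
        intro m hm1 hm2
        have h := congrFun hB2 ⟨m, hm1⟩
        simp only [Fin.tail] at h
        rw [dif_neg (by omega), dif_neg (by omega)] at h
        exact (fapp13 σ (by simp; omega)).trans (h.trans (fapp13 a (by simp)))
      rw [if_pos hB2, MonoidAlgebra.of_apply, MonoidAlgebra.coeff_single, Finsupp.single_apply]
      by_cases hB3 : σ 0 = a 0
      · rw [if_pos (show (a 0)⁻¹ = (σ 0)⁻¹ by rw [hB3])]
        have hA1 : (fun i : Fin (p + 2) =>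
            if h1 : (i : ℕ) ≤ (j : ℕ) then σ ⟨(i : ℕ), by have := j.isLt; omega⟩
            else if h2 : (i : ℕ) = (j : ℕ) + 1 then
              (List.ofFn fun t : Fin q =>
                σ ⟨(j : ℕ) + 1 + (t : ℕ), by have := t.isLt; have := j.isLt; omega⟩).prod
            else σ ⟨(i : ℕ) + q - 1, by have := i.isLt; omega⟩) = a := by
          funext i
          by_cases h1 : (i:ℕ) ≤ (j:ℕ)
          · rw [dif_pos h1]
            by_cases hi : (i:ℕ) = 0
            · exact (fapp13 σ (by simp [hi])).trans (hB3.trans (fapp13 a (by simp [hi])))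
            · obtain ⟨m, hm⟩ : ∃ m, (i:ℕ) = m + 1 := ⟨(i:ℕ) - 1, by omega⟩
              exact (fapp13 σ (by simp [hm])).trans ((h2lt m (by omega)).trans (fapp13 a (by simp [hm])))
          · by_cases h2 : (i:ℕ) = (j:ℕ)+1
            · rw [dif_neg h1, dif_pos h2]
              exact hσprod.trans (h2eq.trans (fapp13 a (by simp [h2])))
            · rw [dif_neg h1, dif_neg h2]
              have hi := i.isLt
              exact (fapp13 σ (by simp; omega)).trans
                ((h2gt ((i:ℕ)-1) (by omega) (by omega)).trans (fapp13 a (by simp; omega)))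
        have hA2 : (Fin.cons
            (((List.ofFn fun t : Fin (p - (j : ℕ)) =>
                σ ⟨(j : ℕ) + q + 1 + (t : ℕ), by have := t.isLt; have := j.isLt; omega⟩).prod)
              * ((List.ofFn fun t : Fin ((j : ℕ) + 1) =>
                σ ⟨(t : ℕ), by have := t.isLt; have := j.isLt; omega⟩).prod))
            (fun t : Fin q =>
              σ ⟨(j : ℕ) + 1 + (t : ℕ), by have := t.isLt; have := j.isLt; omega⟩) : Fin (q+1) → G) = b := by
          funext t
          refine Fin.cases ?_ (fun t => ?_) t
          · rw [Fin.cons_zero]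
            have hP : (List.ofFn fun t : Fin (p - (j : ℕ)) =>
                σ ⟨(j : ℕ) + q + 1 + (t : ℕ), by have := t.isLt; have := j.isLt; omega⟩) =
                List.ofFn fun t : Fin (p - (j : ℕ)) =>
                  a ⟨(j : ℕ) + 2 + (t : ℕ), by have := t.isLt; have := j.isLt; omega⟩ :=
              congrArg List.ofFn (funext fun t => (fapp13 σ (by simp; omega)).trans
                ((h2gt ((j:ℕ)+1+(t:ℕ)) (by have := t.isLt; have := j.isLt; omega) (by omega)).trans
                  (fapp13 a (by simp; omega))))
            have hQ : (List.ofFn fun t : Fin ((j : ℕ) + 1) =>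
                σ ⟨(t : ℕ), by have := t.isLt; have := j.isLt; omega⟩) =
                List.ofFn fun t : Fin ((j : ℕ) + 1) =>
                  a ⟨(t : ℕ), by have := t.isLt; have := j.isLt; omega⟩ :=
              congrArg List.ofFn (funext fun t => by
                by_cases ht : (t:ℕ) = 0
                · exact (fapp13 σ (by simp [ht])).trans (hB3.trans (fapp13 a (by simp [ht])))
                · obtain ⟨m, hm⟩ : ∃ m, (t:ℕ) = m + 1 := ⟨(t:ℕ) - 1, by omega⟩
                  have := t.isLt
                  exact (fapp13 σ (by simp [hm])).trans
                    ((h2lt m (by omega)).trans (fapp13 a (by simp [hm]))))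
            rw [hP, hQ]
            -- now a pure statement about a
            rw [prod_split13' (p+2) ((j:ℕ)+1) (by have := j.isLt; omega) a] at ha
            have hRa : (List.ofFn fun i : Fin (p + 2 - ((j:ℕ)+1) - 1) =>
                a ⟨(j:ℕ) + 1 + 1 + (i:ℕ), by have := i.isLt; have := j.isLt; omega⟩) =
                List.ofFn fun t : Fin (p - (j : ℕ)) =>
                  a ⟨(j : ℕ) + 2 + (t : ℕ), by have := t.isLt; have := j.isLt; omega⟩ := by
              rw [List.ofFn_congr (show p + 2 - ((j:ℕ)+1) - 1 = p - (j:ℕ) by have := j.isLt; omega)]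
              exact congrArg List.ofFn (funext fun i => fapp13 a (by simp))
            rw [hRa] at ha
            set Qa := (List.ofFn fun t : Fin ((j : ℕ) + 1) =>
              a ⟨(t : ℕ), by have := t.isLt; have := j.isLt; omega⟩).prod with hQa
            set Ra := (List.ofFn fun t : Fin (p - (j : ℕ)) =>
              a ⟨(j : ℕ) + 2 + (t : ℕ), by have := t.isLt; have := j.isLt; omega⟩).prod with hRaa
            set c := a ⟨(j:ℕ)+1, by have := j.isLt; omega⟩ with hc
            have h5 : c * Ra = Qa⁻¹ := eq_inv_of_mul_eq_one_right ha
            calc Ra * Qa = c⁻¹ * ((c * Ra) * Qa) := by group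
              _ = c⁻¹ * (Qa⁻¹ * Qa) := by rw [h5]
              _ = c⁻¹ := by group
              _ = b 0 := by rw [← h2eq, inv_inv]
          · rw [Fin.cons_succ]
            exact hb1 t
        rw [if_pos hA1, if_pos hA2, mul_one]
      · rw [if_neg (show ¬ (a 0)⁻¹ = (σ 0)⁻¹ by simpa [inv_inj] using (fun h => hB3 h.symm))]
        have hnA1 : ¬ ((fun i : Fin (p + 2) =>
            if h1 : (i : ℕ) ≤ (j : ℕ) then σ ⟨(i : ℕ), by have := j.isLt; omega⟩
            else if h2 : (i : ℕ) = (j : ℕ) + 1 then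
              (List.ofFn fun t : Fin q =>
                σ ⟨(j : ℕ) + 1 + (t : ℕ), by have := t.isLt; have := j.isLt; omega⟩).prod
            else σ ⟨(i : ℕ) + q - 1, by have := i.isLt; omega⟩) = a) := by
          intro hA1
          apply hB3
          have h0 := congrFun hA1 0
          rw [dif_pos (by simp)] at h0
          exact ((fapp13 σ (by simp)).symm.trans h0 : σ 0 = a 0)
        rw [if_neg hnA1, zero_mul]
    · -- B2 fails
      rw [if_neg hB2, MonoidAlgebra.coeff_zero, Finsupp.coe_zero, Pi.zero_apply]
      by_cases hA1 : ((fun i : Fin (p + 2) =>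
          if h1 : (i : ℕ) ≤ (j : ℕ) then σ ⟨(i : ℕ), by have := j.isLt; omega⟩
          else if h2 : (i : ℕ) = (j : ℕ) + 1 then
            (List.ofFn fun t : Fin q =>
              σ ⟨(j : ℕ) + 1 + (t : ℕ), by have := t.isLt; have := j.isLt; omega⟩).prod
          else σ ⟨(i : ℕ) + q - 1, by have := i.isLt; omega⟩) = a)
      · by_cases hA2 : ((Fin.cons
            (((List.ofFn fun t : Fin (p - (j : ℕ)) =>
                σ ⟨(j : ℕ) + q + 1 + (t : ℕ), by have := t.isLt; have := j.isLt; omega⟩).prod)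
              * ((List.ofFn fun t : Fin ((j : ℕ) + 1) =>
                σ ⟨(t : ℕ), by have := t.isLt; have := j.isLt; omega⟩).prod))
            (fun t : Fin q =>
              σ ⟨(j : ℕ) + 1 + (t : ℕ), by have := t.isLt; have := j.isLt; omega⟩) : Fin (q+1) → G) = b)
        · exfalso
          apply hB2
          funext i
          simp only [Fin.tail]
          by_cases hc1 : (i:ℕ) < (j:ℕ)
          · rw [dif_pos hc1]
            have h := congrFun hA1 ⟨(i:ℕ)+1, by have := j.isLt; omega⟩
            rw [dif_pos (show ((⟨(i:ℕ)+1, by have := j.isLt; omega⟩ : Fin (p+2)) : ℕ) ≤ (j:ℕ) by simpa using by omega)] at h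
            exact (fapp13 σ (by simp)).trans (h.trans (fapp13 a (by simp)))
          · by_cases hc2 : (i:ℕ) = (j:ℕ)
            · rw [dif_neg hc1, dif_pos hc2]
              have h := congrFun hA1 ⟨(j:ℕ)+1, by have := j.isLt; omega⟩
              rw [dif_neg (by simpa using by omega)] at h
              rw [show (dite _ _ _ : G) = _ from dif_pos (by simpa using rfl)] at h
              have hσp : (List.ofFn fun t : Fin q =>
                  σ ⟨(j:ℕ)+1+(t:ℕ), by have := t.isLt; have := j.isLt; omega⟩).prod = (b 0)⁻¹ := by
                refine (congrArg List.prod (congrArg List.ofFn (funext fun t => ?_))).trans hbtail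
                have h2 := congrFun hA2 t.succ
                rw [Fin.cons_succ] at h2
                exact h2
              exact (hσp.symm.trans h).trans (fapp13 a (by simp [hc2]))
            · rw [dif_neg hc1, dif_neg hc2]
              have h := congrFun hA1 ⟨(i:ℕ)+1, by have := j.isLt; omega⟩
              rw [dif_neg (by simpa using by omega), dif_neg (by simpa using by omega)] at h
              exact (fapp13 σ (by simp; omega)).trans (h.trans (fapp13 a (by simp)))
        · rw [if_neg hA2, mul_zero]
      · rw [if_neg hA1, zero_mul]
  · -- B1 fails
    rw [if_neg hB1, MonoidAlgebra.coeff_zero, Finsupp.sum_zero_index, MonoidAlgebra.coeff_zero, Finsupp.coe_zero, Pi.zero_apply]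
    have hnA2 : ¬ ((Fin.cons
        (((List.ofFn fun t : Fin (p - (j : ℕ)) =>
            σ ⟨(j : ℕ) + q + 1 + (t : ℕ), by have := t.isLt; have := j.isLt; omega⟩).prod)
          * ((List.ofFn fun t : Fin ((j : ℕ) + 1) =>
            σ ⟨(t : ℕ), by have := t.isLt; have := j.isLt; omega⟩).prod))
        (fun t : Fin q =>
          σ ⟨(j : ℕ) + 1 + (t : ℕ), by have := t.isLt; have := j.isLt; omega⟩) : Fin (q+1) → G) = b) := by
      intro hA2
      apply hB1
      funext t
      have h := congrFun hA2 t.succ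
      rw [Fin.cons_succ] at h
      simp only [Fin.tail]
      exact (fapp13 σ (by simp; omega)).trans h
    rw [if_neg hnA2, mul_zero]
end
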